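/- In the recursive max-linear model with propagating noise, if the deterministic coefficients satisfy b_{ji} = ⋁_{k ∈ de(j)∩an(i)} b_{jk} b_{ki} / b_{kk} (i.e., the edge j → i is not needed), then almost surely the random coefficients satisfy b̄_{ji} = ⋁_{k ∈ de(j)∩an(i)} b̄_{jk} b̄_{ki} / b̄_{kk}. -/

import Mathlib

open Matrix Finset MeasureTheory ProbabilityTheory Filter

noncomputable section

/-- Max-times (tropical) matrix product: `(F ⊙ G) i j = ⋁ k, F i k * G k j`. -/
def mOdot {m n p : ℕ} (F : Matrix (Fin m) (Fin n) NNReal) (G : Matrix (Fin n) (Fin p) NNReal) :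
    Matrix (Fin m) (Fin p) NNReal :=
  Matrix.of fun i j => Finset.univ.sup fun k => F i k * G k j

/-- Entrywise maximum of two matrices. -/
def mSup {m n : ℕ} (A B : Matrix (Fin m) (Fin n) NNReal) : Matrix (Fin m) (Fin n) NNReal :=
  Matrix.of fun i j => A i j ⊔ B i j

/-- Max-times power: `A^{⊙0} = I`, `A^{⊙(k+1)} = A^{⊙k} ⊙ A`. -/
def mPow {d : ℕ} (A : Matrix (Fin d) (Fin d) NNReal) : ℕ → Matrix (Fin d) (Fin d) NNReal
  | 0 => 1
  | k + 1 => mOdot (mPow A k) A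

/-- Kleene star: `B = ⋁_{k=0}^{d-1} C^{⊙k}`. -/
def kleene {d : ℕ} (C : Matrix (Fin d) (Fin d) NNReal) : Matrix (Fin d) (Fin d) NNReal :=
  Matrix.of fun i j => (Finset.range d).sup fun k => mPow C k i j

/-- `IsWalk C i j l` : `l` is the list of vertices after `i` of a walk from `i` to `j`
    along positive entries of `C`. -/
def IsWalk {d : ℕ} (C : Matrix (Fin d) (Fin d) NNReal) : Fin d → Fin d → List (Fin d) → Prop
  | i, j, [] => i = j
  | i, j, k :: l => 0 < C i k ∧ IsWalk C k j l

/-- Deterministic path weight: product of edge weights along a walk. -/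
def walkWeight {d : ℕ} (C : Matrix (Fin d) (Fin d) NNReal) : Fin d → List (Fin d) → NNReal
  | _, [] => 1
  | i, k :: l => C i k * walkWeight C k l

/-- Acyclicity: the only walk from a vertex to itself is the empty one. -/
def Acyclic {d : ℕ} (C : Matrix (Fin d) (Fin d) NNReal) : Prop :=
  ∀ i l, IsWalk C i i l → l = []

/-- Non-noisy ML coefficient: maximal deterministic path weight from `j` to `i`
    (`1` on the diagonal; `0` if there is no path). -/
def detB {d : ℕ} (C : Matrix (Fin d) (Fin d) NNReal) (j i : Fin d) : NNReal :=
  sSup {w | ∃ l, IsWalk C j i l ∧ w = walkWeight C j l}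

/-- Noisy path weight (without the initial noise factor `ε j`):
    `∏_l c_{k_l k_{l+1}} ε_{k_{l+1}}` along a walk. -/
def noisyWeight {d : ℕ} (C : Matrix (Fin d) (Fin d) NNReal) (ε : Fin d → NNReal) :
    Fin d → List (Fin d) → NNReal
  | _, [] => 1
  | i, k :: l => C i k * ε k * noisyWeight C ε k l

/-- Random (noisy) ML coefficient `b̄_{ji}`: maximal random path weight
    `d̄_{ji}(p) = ε_j ∏ c ε` from `j` to `i`; equals `ε j` on the diagonal,
    `0` if `j` is not an ancestor of `i`. -/
def barB {d : ℕ} (C : Matrix (Fin d) (Fin d) NNReal) (ε : Fin d → NNReal) (j i : Fin d) :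
    NNReal :=
  sSup {w | ∃ l, IsWalk C j i l ∧ w = ε j * noisyWeight C ε j l}

/-- `j` is a strict ancestor of `i` (there exists a nonempty path). -/
def Reach {d : ℕ} (C : Matrix (Fin d) (Fin d) NNReal) (j i : Fin d) : Prop :=
  ∃ l, l ≠ [] ∧ IsWalk C j i l

/-- Max-times product of a row vector with a matrix. -/
def vOdot {d : ℕ} (x : Fin d → NNReal) (A : Matrix (Fin d) (Fin d) NNReal) : Fin d → NNReal :=
  fun j => Finset.univ.sup fun k => x k * A k j

/-- Componentwise maximum of two vectors. -/
def vSup {d : ℕ} (x y : Fin d → NNReal) : Fin d → NNReal := fun i => x i ⊔ y i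

/-- Maximum of `f k` over all `k` satisfying `P` (0 if there is none). -/
def supOver {d : ℕ} (P : Fin d → Prop) (f : Fin d → NNReal) : NNReal :=
  sSup {w | ∃ k, P k ∧ w = f k}

end

section Aux

variable {d : ℕ} {C : Matrix (Fin d) (Fin d) NNReal}

lemma isWalk_nil_iff {i j : Fin d} : IsWalk C i j ([]) ↔ i = j := Iff.rfl

lemma isWalk_cons_iff {i j a : Fin d} {t : List (Fin d)} :
    IsWalk C i j (a :: t) ↔ 0 < C i a ∧ IsWalk C a j t := Iff.rfl

lemma isWalk_append {i k j : Fin d} {l1 l2 : List (Fin d)}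
    (h1 : IsWalk C i k l1) (h2 : IsWalk C k j l2) : IsWalk C i j (l1 ++ l2) := by
  induction l1 generalizing i with
  | nil => cases h1; simpa using h2
  | cons a t ih => exact ⟨h1.1, ih h1.2⟩

lemma noisyWeight_append (ε : Fin d → NNReal) {i k : Fin d} {l1 : List (Fin d)}
    (h1 : IsWalk C i k l1) (l2 : List (Fin d)) :
    noisyWeight C ε i (l1 ++ l2) = noisyWeight C ε i l1 * noisyWeight C ε k l2 := by
  induction l1 generalizing i with
  | nil => cases h1; simp [noisyWeight]
  | cons a t ih => simp [noisyWeight, ih h1.2, mul_assoc]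

lemma isWalk_split {i j m : Fin d} {l : List (Fin d)} (h : IsWalk C i j l) (hm : m ∈ l) :
    ∃ l1 l2, l = l1 ++ m :: l2 ∧ IsWalk C i m (l1 ++ [m]) ∧ IsWalk C m j l2 := by
  induction l generalizing i with
  | nil => cases hm
  | cons a t ih =>
    rcases List.mem_cons.1 hm with rfl | hm'
    · exact ⟨[], t, rfl, ⟨h.1, rfl⟩, h.2⟩
    · obtain ⟨l1, l2, rfl, hw1, hw2⟩ := ih h.2 hm'
      exact ⟨a :: l1, l2, rfl, ⟨h.1, hw1⟩, hw2⟩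

lemma walk_nodup (hacyc : Acyclic C) {i j : Fin d} {l : List (Fin d)}
    (h : IsWalk C i j l) : (i :: l).Nodup := by
  induction l generalizing i with
  | nil => simp
  | cons a t ih =>
    refine List.nodup_cons.2 ⟨?_, ih h.2⟩
    intro hmem
    obtain ⟨l1, l2, heq, hw1, hw2⟩ := isWalk_split h hmem
    simpa using hacyc i _ hw1

lemma walk_length_le (hacyc : Acyclic C) {i j : Fin d} {l : List (Fin d)}
    (h : IsWalk C i j l) : l.length ≤ d := by
  have hnd : l.Nodup := (List.nodup_cons.1 (walk_nodup hacyc h)).2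
  simpa using hnd.length_le_card

lemma walkSet_finite (hacyc : Acyclic C) (i j : Fin d) :
    {l : List (Fin d) | IsWalk C i j l}.Finite :=
  (List.finite_length_le (Fin d) d).subset fun l hl => walk_length_le hacyc hl

lemma weightSet_finite (hacyc : Acyclic C) (i j : Fin d) (f : List (Fin d) → NNReal) :
    {w | ∃ l, IsWalk C i j l ∧ w = f l}.Finite := by
  have : {w | ∃ l, IsWalk C i j l ∧ w = f l} = f '' {l | IsWalk C i j l} := by
    ext w; simp [Set.mem_image, eq_comm]
  rw [this]
  exact (walkSet_finite hacyc i j).image f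

lemma not_reach_self (hacyc : Acyclic C) (k : Fin d) : ¬ Reach C k k := by
  rintro ⟨l, hne, hw⟩
  exact hne (hacyc k l hw)

lemma detB_diag (hacyc : Acyclic C) (k : Fin d) : detB C k k = 1 := by
  have : {w | ∃ l, IsWalk C k k l ∧ w = walkWeight C k l} = {1} := by
    ext w
    constructor
    · rintro ⟨l, hw, rfl⟩
      have := hacyc k l hw
      subst this
      rfl
    · rintro rfl
      exact ⟨[], rfl, rfl⟩
  rw [detB, this, csSup_singleton]

lemma barB_diag (hacyc : Acyclic C) (ε : Fin d → NNReal) (k : Fin d) :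
    barB C ε k k = ε k := by
  have : {w | ∃ l, IsWalk C k k l ∧ w = ε k * noisyWeight C ε k l} = {ε k} := by
    ext w
    constructor
    · rintro ⟨l, hw, rfl⟩
      have := hacyc k l hw
      subst this
      simp [noisyWeight]
    · rintro rfl
      exact ⟨[], rfl, by simp [noisyWeight]⟩
  rw [barB, this, csSup_singleton]

lemma walkWeight_le_noisyWeight {ε : Fin d → NNReal} (hε : ∀ k, 1 ≤ ε k)
    (i : Fin d) (l : List (Fin d)) : walkWeight C i l ≤ noisyWeight C ε i l := by
  induction l generalizing i with
  | nil => exact le_refl 1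
  | cons a t ih =>
    show C i a * walkWeight C a t ≤ C i a * ε a * noisyWeight C ε a t
    calc C i a * walkWeight C a t ≤ C i a * noisyWeight C ε a t :=
          mul_le_mul_right (ih a) _
      _ ≤ C i a * ε a * noisyWeight C ε a t := by
          rw [mul_assoc]
          exact mul_le_mul_right (le_mul_of_one_le_left zero_le (hε a)) _

lemma walkWeight_mul_last_le {ε : Fin d → NNReal} (hε : ∀ k, 1 ≤ ε k)
    {i j : Fin d} {l : List (Fin d)} (h : IsWalk C i j l) (hne : l ≠ []) :
    walkWeight C i l * ε j ≤ noisyWeight C ε i l := by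
  induction l generalizing i with
  | nil => exact absurd rfl hne
  | cons a t ih =>
    rcases eq_or_ne t ([]) with rfl | hte
    · rw [show a = j from h.2]
      show C i j * 1 * ε j ≤ C i j * ε j * 1
      simp
    · show C i a * walkWeight C a t * ε j ≤ C i a * ε a * noisyWeight C ε a t
      calc C i a * walkWeight C a t * ε j = C i a * (walkWeight C a t * ε j) := by ring
        _ ≤ C i a * noisyWeight C ε a t := mul_le_mul_right (ih h.2 hte) _
        _ ≤ C i a * ε a * noisyWeight C ε a t := by
            rw [mul_assoc]
            exact mul_le_mul_right (le_mul_of_one_le_left zero_le (hε a)) _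

lemma supOverSet_finite (P : Fin d → Prop) (f : Fin d → NNReal) :
    {w | ∃ k, P k ∧ w = f k}.Finite := by
  have : {w | ∃ k, P k ∧ w = f k} = f '' {k | P k} := by
    ext w; simp [Set.mem_image, eq_comm]
  rw [this]
  exact (Set.toFinite _).image f

end Aux

lemma main_det {d : ℕ} {C : Matrix (Fin d) (Fin d) NNReal} (hacyc : Acyclic C)
    (e : Fin d → NNReal) (he : ∀ k, 1 ≤ e k) (j i : Fin d)
    (hdet : detB C j i = supOver (fun k => Reach C j k ∧ Reach C k i)
      (fun k => detB C j k * detB C k i / detB C k k)) :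
    barB C e j i = supOver (fun k => Reach C j k ∧ Reach C k i)
      (fun k => barB C e j k * barB C e k i / barB C e k k) := by
  have hene : ∀ k, e k ≠ 0 := fun k => (zero_lt_one.trans_le (he k)).ne'
  have hdet' : detB C j i = sSup {w | ∃ k, (Reach C j k ∧ Reach C k i) ∧
      w = detB C j k * detB C k i / detB C k k} := hdet
  have hji : j ≠ i := by
    rintro rfl
    have hempty : {w | ∃ k, (Reach C j k ∧ Reach C k j) ∧
        w = detB C j k * detB C k j / detB C k k} = ∅ := by
      ext w
      simp only [Set.mem_setOf_eq, Set.mem_empty_iff_false, iff_false, not_exists]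
      rintro k ⟨⟨⟨l1, h1ne, h1⟩, ⟨l2, h2ne, h2⟩⟩, -⟩
      have h := hacyc j (l1 ++ l2) (isWalk_append h1 h2)
      rcases List.append_eq_nil_iff.1 h with ⟨e1, -⟩
      exact h1ne e1
    rw [hempty, csSup_empty, detB_diag hacyc] at hdet'
    exact absurd hdet' (by simp)
  show barB C e j i = sSup {w | ∃ k, (Reach C j k ∧ Reach C k i) ∧
      w = barB C e j k * barB C e k i / barB C e k k}
  apply le_antisymm
  · show sSup {w | ∃ l, IsWalk C j i l ∧ w = e j * noisyWeight C e j l} ≤ _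
    refine csSup_le' ?_
    rintro w ⟨l, hw, rfl⟩
    rcases l with _ | ⟨a, t⟩
    · exact absurd hw hji
    rcases t with _ | ⟨b, t⟩
    · -- single edge j → i
      obtain ⟨hCja, ha⟩ := hw
      rw [show a = i from ha] at hCja ⊢
      have hdle : C j i ≤ detB C j i :=
        le_csSup (weightSet_finite hacyc j i (walkWeight C j)).bddAbove
          ⟨[i], ⟨hCja, rfl⟩, (mul_one _).symm⟩
      have hpos : 0 < detB C j i := lt_of_lt_of_le hCja hdle
      have hTdne : {w | ∃ k, (Reach C j k ∧ Reach C k i) ∧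
          w = detB C j k * detB C k i / detB C k k}.Nonempty := by
        rcases Set.eq_empty_or_nonempty {w | ∃ k, (Reach C j k ∧ Reach C k i) ∧
            w = detB C j k * detB C k i / detB C k k} with hne | h
        · rw [hne, csSup_empty] at hdet'
          rw [hdet'] at hpos
          simp at hpos
        · exact h
      have hmem := hTdne.csSup_mem (supOverSet_finite _ _)
      rw [← hdet'] at hmem
      obtain ⟨k, ⟨hjk, hki⟩, hkval⟩ := hmem
      rw [detB_diag hacyc, div_one] at hkval
      have hkine : k ≠ i := by rintro rfl; exact not_reach_self hacyc k hki
      obtain ⟨l1, -, hl1⟩ := id hjk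
      have hne1 : {w | ∃ l, IsWalk C j k l ∧ w = walkWeight C j l}.Nonempty :=
        ⟨_, l1, hl1, rfl⟩
      obtain ⟨m1, hm1, hv1'⟩ := hne1.csSup_mem (weightSet_finite hacyc j k (walkWeight C j))
      have hv1 : detB C j k = walkWeight C j m1 := hv1'
      obtain ⟨l2, -, hl2⟩ := id hki
      have hne2 : {w | ∃ l, IsWalk C k i l ∧ w = walkWeight C k l}.Nonempty :=
        ⟨_, l2, hl2, rfl⟩
      obtain ⟨m2, hm2, hv2'⟩ := hne2.csSup_mem (weightSet_finite hacyc k i (walkWeight C k))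
      have hv2 : detB C k i = walkWeight C k m2 := hv2'
      have hm2ne : m2 ≠ [] := by rintro rfl; exact hkine hm2
      have hb1 : e j * noisyWeight C e j m1 ≤ barB C e j k :=
        le_csSup (weightSet_finite hacyc j k (fun l => e j * noisyWeight C e j l)).bddAbove
          ⟨m1, hm1, rfl⟩
      have hb2 : e k * noisyWeight C e k m2 ≤ barB C e k i :=
        le_csSup (weightSet_finite hacyc k i (fun l => e k * noisyWeight C e k l)).bddAbove
          ⟨m2, hm2, rfl⟩
      have hchain : e j * noisyWeight C e j ([i]) ≤ barB C e j k * barB C e k i / e k := by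
        have step1 : e j * noisyWeight C e j ([i])
            ≤ (e j * noisyWeight C e j m1) * (e k * noisyWeight C e k m2) / e k := by
          rw [show (e j * noisyWeight C e j m1) * (e k * noisyWeight C e k m2)
              = e k * ((e j * noisyWeight C e j m1) * noisyWeight C e k m2) from by ring,
            mul_div_cancel_left₀ _ (hene k)]
          show e j * (C j i * e i * 1) ≤ _
          rw [mul_one]
          have hw1 : walkWeight C j m1 ≤ noisyWeight C e j m1 :=
            walkWeight_le_noisyWeight he j m1
          have hw2 : walkWeight C k m2 * e i ≤ noisyWeight C e k m2 :=
            walkWeight_mul_last_le he hm2 hm2ne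
          calc e j * (C j i * e i) ≤ e j * (detB C j i * e i) :=
                mul_le_mul_right (mul_le_mul_left hdle _) _
            _ = e j * walkWeight C j m1 * (walkWeight C k m2 * e i) := by
                rw [hkval, hv1, hv2]; ring
            _ ≤ e j * noisyWeight C e j m1 * noisyWeight C e k m2 :=
                mul_le_mul' (mul_le_mul_right hw1 _) hw2
        refine step1.trans ?_
        rw [div_eq_mul_inv, div_eq_mul_inv]
        exact mul_le_mul_left (mul_le_mul' hb1 hb2) _
      exact hchain.trans (le_csSup (supOverSet_finite _ _).bddAbove
        ⟨k, ⟨hjk, hki⟩, by rw [barB_diag hacyc]⟩)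
    · -- walk of length ≥ 2: split at the first vertex
      obtain ⟨hCja, hrest⟩ := hw
      have hjk : Reach C j a := ⟨[a], by simp, hCja, rfl⟩
      have hki : Reach C a i := ⟨b :: t, by simp, hrest⟩
      have hb1 : e j * noisyWeight C e j ([a]) ≤ barB C e j a :=
        le_csSup (weightSet_finite hacyc j a (fun l => e j * noisyWeight C e j l)).bddAbove
          ⟨[a], ⟨hCja, rfl⟩, rfl⟩
      have hb2 : e a * noisyWeight C e a (b :: t) ≤ barB C e a i :=
        le_csSup (weightSet_finite hacyc a i (fun l => e a * noisyWeight C e a l)).bddAbove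
          ⟨b :: t, hrest, rfl⟩
      have heq : e j * noisyWeight C e j (a :: b :: t)
          = (e j * noisyWeight C e j ([a])) * (e a * noisyWeight C e a (b :: t)) / e a := by
        show e j * (C j a * e a * noisyWeight C e a (b :: t))
            = (e j * (C j a * e a * 1)) * (e a * noisyWeight C e a (b :: t)) / e a
        rw [show (e j * (C j a * e a * 1)) * (e a * noisyWeight C e a (b :: t))
            = e a * (e j * (C j a * e a * noisyWeight C e a (b :: t))) from by ring,
          mul_div_cancel_left₀ _ (hene a)]
      rw [heq]
      have hle : (e j * noisyWeight C e j ([a])) * (e a * noisyWeight C e a (b :: t)) / e a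
          ≤ barB C e j a * barB C e a i / e a := by
        rw [div_eq_mul_inv, div_eq_mul_inv]
        exact mul_le_mul_left (mul_le_mul' hb1 hb2) _
      exact hle.trans (le_csSup (supOverSet_finite _ _).bddAbove
        ⟨a, ⟨hjk, hki⟩, by rw [barB_diag hacyc]⟩)
  · refine csSup_le' ?_
    rintro w ⟨k, ⟨hjk, hki⟩, rfl⟩
    rw [barB_diag hacyc]
    obtain ⟨l1, -, hl1⟩ := id hjk
    have hne1 : {w | ∃ l, IsWalk C j k l ∧ w = e j * noisyWeight C e j l}.Nonempty :=
      ⟨_, l1, hl1, rfl⟩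
    obtain ⟨m1, hm1, hv1'⟩ :=
      hne1.csSup_mem (weightSet_finite hacyc j k (fun l => e j * noisyWeight C e j l))
    have hv1 : barB C e j k = e j * noisyWeight C e j m1 := hv1'
    obtain ⟨l2, -, hl2⟩ := id hki
    have hne2 : {w | ∃ l, IsWalk C k i l ∧ w = e k * noisyWeight C e k l}.Nonempty :=
      ⟨_, l2, hl2, rfl⟩
    obtain ⟨m2, hm2, hv2'⟩ :=
      hne2.csSup_mem (weightSet_finite hacyc k i (fun l => e k * noisyWeight C e k l))
    have hv2 : barB C e k i = e k * noisyWeight C e k m2 := hv2'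
    rw [hv1, hv2]
    have heq : (e j * noisyWeight C e j m1) * (e k * noisyWeight C e k m2) / e k
        = e j * noisyWeight C e j (m1 ++ m2) := by
      rw [noisyWeight_append e hm1 m2,
        show (e j * noisyWeight C e j m1) * (e k * noisyWeight C e k m2)
          = e k * (e j * (noisyWeight C e j m1 * noisyWeight C e k m2)) from by ring,
        mul_div_cancel_left₀ _ (hene k)]
    rw [heq]
    exact le_csSup (weightSet_finite hacyc j i (fun l => e j * noisyWeight C e j l)).bddAbove
      ⟨m1 ++ m2, isWalk_append hm1 hm2, rfl⟩

/-- if the deterministic coefficients satisfy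
`b_{ji} = ⋁_{k ∈ de(j)∩an(i)} b_{jk} b_{ki} / b_{kk}`, then almost surely the random
coefficients satisfy the analogous identity. -/
theorem det_identity_implies_random_identity (d : ℕ) (C : Matrix (Fin d) (Fin d) NNReal)
    (hacyc : Acyclic C) {Ω : Type} [MeasurableSpace Ω] (μ : Measure Ω)
    [IsProbabilityMeasure μ] (ε : Fin d → Ω → NNReal) (hε : ∀ k ω, 1 ≤ ε k ω)
    (j i : Fin d)
    (hdet : detB C j i = supOver (fun k => Reach C j k ∧ Reach C k i)
      (fun k => detB C j k * detB C k i / detB C k k)) :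
    ∀ᵐ ω ∂μ, barB C (fun k => ε k ω) j i =
      supOver (fun k => Reach C j k ∧ Reach C k i)
        (fun k => barB C (fun k' => ε k' ω) j k * barB C (fun k' => ε k' ω) k i /
          barB C (fun k' => ε k' ω) k k) := by
  exact ae_of_all μ fun ω => main_det hacyc (fun k => ε k ω) (fun k => hε k ω) j i hdet
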